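/- Let F_q be a finite field, k ≥ 1, let α_{i_1},…,α_{i_{k−1}} ∈ F_q be distinct and η ∈ F_q. Let D be the k×k matrix whose j-th column, for 1 ≤ j ≤ k−1, is (1+η α_{i_j}^k, α_{i_j}, α_{i_j}^2, …, α_{i_j}^{k−1})^T and whose last column is (0,0,…,0,1)^T. Then det D = ∏_{1≤j<ℓ≤k−1}(α_{i_ℓ}−α_{i_j}) · (1 + (−1)^{k−2} η (∏_{j=1}^{k−1} α_{i_j})(Σ_{j=1}^{k−1} α_{i_j})). In particular, D is invertible if and only if (−1)^{k−1} η (∏_{j=1}^{k−1} α_{i_j})(Σ_{j=1}^{k−1} α_{i_j}) ≠ 1. -/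

import Mathlib

open Polynomial Finset

noncomputable section

variable {F : Type*} [Field F]

/-- The twisted polynomial `∑_{i<k} f_i x^i + η f_h x^{k-1+t}` from `V_{k,t,h,η}`. -/
def twPoly (k t h : ℕ) (η : F) (f : Fin k → F) : Polynomial F :=
  (∑ i : Fin k, Polynomial.C (f i) * Polynomial.X ^ (i : ℕ)) +
    Polynomial.C (η * if hh : h < k then f ⟨h, hh⟩ else 0) * Polynomial.X ^ (k - 1 + t)

/-- The coefficient `f_{k-1}` of a coefficient vector `f : Fin k → F`. -/
def topCoeffFin {k : ℕ} (f : Fin k → F) : F :=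
  if hk : k - 1 < k then f ⟨k - 1, hk⟩ else 0

/-- Codewords of the row-column twisted Reed-Solomon code. -/
def rctrsWords (k t h : ℕ) (η : F) {m : ℕ} (α : Fin m → F) (b c lam : F) :
    Set (Fin (m + 1) → F) :=
  { w | ∃ f : Fin k → F,
      w = Fin.snoc (fun i => (twPoly k t h η f).eval (α i))
            ((twPoly k t h η f).eval b - lam * (twPoly k t h η f).eval c) }

/-- The row-column twisted Reed-Solomon code `RCTRS_{h,t}(α,b,c,λ,η)`. -/
def RCTRS (k t h : ℕ) (η : F) {m : ℕ} (α : Fin m → F) (b c lam : F) :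
    Submodule F (Fin (m + 1) → F) :=
  Submodule.span F (rctrsWords k t h η α b c lam)

/-- Codewords of the extended row-column twisted Reed-Solomon code. -/
def rctrsWordsExt (k t h : ℕ) (η : F) {m : ℕ} (α : Fin m → F) (b c lam : F) :
    Set (Fin (m + 2) → F) :=
  { w | ∃ f : Fin k → F,
      w = Fin.snoc (Fin.snoc (fun i => (twPoly k t h η f).eval (α i))
            ((twPoly k t h η f).eval b - lam * (twPoly k t h η f).eval c)) (topCoeffFin f) }

/-- The extended row-column twisted Reed-Solomon code `RCTRS_{h,t}(α,b,c,λ,η,∞)`. -/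
def RCTRSext (k t h : ℕ) (η : F) {m : ℕ} (α : Fin m → F) (b c lam : F) :
    Submodule F (Fin (m + 2) → F) :=
  Submodule.span F (rctrsWordsExt k t h η α b c lam)

/-- Hamming weight. -/
def wt {n : ℕ} (x : Fin n → F) : ℕ := Nat.card {i : Fin n // x i ≠ 0}

/-- An `[n,k]` code is MDS if it has dimension `k` and minimum Hamming distance `n-k+1`. -/
def IsMDS {n : ℕ} (C : Submodule F (Fin n → F)) (k : ℕ) : Prop :=
  Module.finrank F C = k ∧ ∀ x ∈ C, x ≠ 0 → n - k + 1 ≤ wt x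

/-- The Schur square of a code. -/
def schurSq {n : ℕ} (C : Submodule F (Fin n → F)) : Submodule F (Fin n → F) :=
  Submodule.span F { w | ∃ x ∈ C, ∃ y ∈ C, w = x * y }

/-- Code equivalence: a permutation of coordinates followed by nonzero coordinatewise scaling. -/
def codeEquiv {n : ℕ} (C D : Submodule F (Fin n → F)) : Prop :=
  ∃ σ : Equiv.Perm (Fin n), ∃ v : Fin n → F, (∀ i, v i ≠ 0) ∧
    (C : Set (Fin n → F)) =
      (fun x : Fin n → F => fun i => v i * x (σ i)) '' (D : Set (Fin n → F))

/-- Generalized Reed-Solomon code. -/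
def GRS (k : ℕ) {n : ℕ} (α v : Fin n → F) : Submodule F (Fin n → F) :=
  Submodule.span F
    { w | ∃ f ∈ Polynomial.degreeLT F k, w = fun i => v i * Polynomial.eval (α i) f }

/-- Extended generalized Reed-Solomon code. -/
def GRSext (k : ℕ) {n : ℕ} (α v : Fin n → F) : Submodule F (Fin (n + 1) → F) :=
  Submodule.span F
    { w | ∃ f ∈ Polynomial.degreeLT F k,
        w = Fin.snoc (fun i => v i * Polynomial.eval (α i) f) (f.coeff (k - 1)) }

/-- A code of length `m+1` is non-RS if it is equivalent to no GRS and no extended GRS code. -/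
def IsNonRS {m : ℕ} (C : Submodule F (Fin (m + 1) → F)) : Prop :=
  (∀ (k' : ℕ) (α v : Fin (m + 1) → F), Function.Injective α → (∀ i, v i ≠ 0) →
      ¬ codeEquiv C (GRS k' α v)) ∧
  (∀ (k' : ℕ) (α v : Fin m → F), Function.Injective α → (∀ i, v i ≠ 0) →
      ¬ codeEquiv C (GRSext k' α v))

/-- Column twisted Reed-Solomon code. -/
def CTRS (k : ℕ) {m : ℕ} (α : Fin m → F) (b c lam : F) : Submodule F (Fin (m + 1) → F) :=
  Submodule.span F
    { w | ∃ f ∈ Polynomial.degreeLT F k,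
        w = Fin.snoc (fun i => Polynomial.eval (α i) f)
              (Polynomial.eval b f - lam * Polynomial.eval c f) }

/-- Extended column twisted Reed-Solomon code. -/
def CTRSext (k : ℕ) {m : ℕ} (α : Fin m → F) (b c lam : F) : Submodule F (Fin (m + 2) → F) :=
  Submodule.span F
    { w | ∃ f ∈ Polynomial.degreeLT F k,
        w = Fin.snoc (Fin.snoc (fun i => Polynomial.eval (α i) f)
              (Polynomial.eval b f - lam * Polynomial.eval c f)) (f.coeff (k - 1)) }

/-- `Φ_J(x) = ∏_{j∈J}(x−α_j)·(1 + (−1)^{|J|} η x ∏_{j∈J} α_j)`. -/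
def PhiRC {m : ℕ} (α : Fin m → F) (η : F) (J : Finset (Fin m)) (x : F) : F :=
  (∏ j ∈ J, (x - α j)) * (1 + (-1 : F) ^ J.card * η * x * ∏ j ∈ J, α j)

/-- `Ψ_J(x) = ∏_{j∈J}(x−α_j)·(1 + ηx + η Σ_{j∈J} α_j)`. -/
def PsiRC {m : ℕ} (α : Fin m → F) (η : F) (J : Finset (Fin m)) (x : F) : F :=
  (∏ j ∈ J, (x - α j)) * (1 + η * x + η * ∑ j ∈ J, α j)

/-- `Φ_{J,h}(x) = ∏_{j∈J}(x−α_j)·(1 + (−1)^{k−1−h} η σ_{k−h}(α_J, x))`. -/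
def PhiRCh {m : ℕ} (α : Fin m → F) (η : F) (k h : ℕ) (J : Finset (Fin m)) (x : F) : F :=
  (∏ j ∈ J, (x - α j)) *
    (1 + (-1 : F) ^ (k - 1 - h) * η * Multiset.esymm (x ::ₘ J.val.map α) (k - h))

/-- The image of a subgroup of `Fˣ` in `F`. -/
def unitsImage (G : Subgroup Fˣ) : Set F := (fun g : Fˣ => (g : F)) '' (G : Set Fˣ)

end

noncomputable section

variable {F : Type*} [Field F]

/-- The matrix `D` of STATEMENT 4 (with `k = r+1`): the `j`-th column, for `j ≤ k−1`, is
`(1+η α_j^k, α_j, α_j^2, …, α_j^{k−1})ᵀ` and the last column is `(0,…,0,1)ᵀ`. -/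
def Dmat0 {r : ℕ} (β : Fin r → F) (η : F) : Matrix (Fin (r + 1)) (Fin (r + 1)) F :=
  Matrix.of fun i j =>
    if hj : (j : ℕ) < r then
      if (i : ℕ) = 0 then 1 + η * β ⟨j, hj⟩ ^ (r + 1) else β ⟨j, hj⟩ ^ (i : ℕ)
    else
      if (i : ℕ) = r then 1 else 0

open Matrix

lemma esymm_one' (s : Multiset F) : s.esymm 1 = s.sum := by
  simp [Multiset.esymm, Multiset.powersetCard_one, Multiset.map_map, Function.comp]

lemma gapdet (s : ℕ) (v : Fin (s + 1) → F) :
    (Matrix.of fun i j : Fin (s + 1) => v i ^ (if (j : ℕ) < s then (j : ℕ) else s + 1)).det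
      = (∏ i : Fin (s + 1), ∏ j ∈ Finset.Ioi i, (v j - v i)) * ∑ i, v i := by
  set w : Fin (s + 2) → F[X] := Fin.cons X (fun i => C (v i)) with hw
  have h1 : (Matrix.vandermonde w).det =
      (∏ j : Fin (s + 1), (C (v j) - X)) *
        C (∏ i : Fin (s + 1), ∏ j ∈ Finset.Ioi i, (v j - v i)) := by
    rw [Matrix.det_vandermonde, Fin.prod_univ_succ]
    rw [Fin.prod_Ioi_zero]
    simp only [hw, Fin.cons_succ, Fin.cons_zero]
    congr 1
    rw [map_prod]
    refine Finset.prod_congr rfl fun i _ => ?_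
    rw [Fin.prod_Ioi_succ, map_prod]
    refine Finset.prod_congr rfl fun j hj => ?_
    simp [map_sub]
  -- expansion along row 0
  have hsub : ∀ j : Fin (s + 2), (Matrix.vandermonde w).submatrix Fin.succ j.succAbove =
      (Matrix.of fun i' j' : Fin (s + 1) => v i' ^ ((j.succAbove j' : ℕ))).map C := by
    intro j
    ext i' j'
    simp [hw, Matrix.vandermonde, map_pow]
  have h2 : (Matrix.vandermonde w).det =
      ∑ j : Fin (s + 2), (-1 : F[X]) ^ (j : ℕ) * X ^ (j : ℕ) *
        C ((Matrix.of fun i' j' : Fin (s + 1) => v i' ^ ((j.succAbove j' : ℕ))).det) := by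
    rw [Matrix.det_succ_row_zero]
    refine Finset.sum_congr rfl fun j _ => ?_
    rw [hsub j, ← RingHom.mapMatrix_apply, ← RingHom.map_det]
    simp [hw, Matrix.vandermonde]
  set d : Fin (s + 2) → F := fun j =>
    (Matrix.of fun i' j' : Fin (s + 1) => v i' ^ ((j.succAbove j' : ℕ))).det with hd
  have hterm : ∀ j : Fin (s + 2),
      ((-1 : F[X]) ^ (j : ℕ) * X ^ (j : ℕ) * C (d j)).coeff s =
        if s = (j : ℕ) then (-1 : F) ^ (j : ℕ) * d j else 0 := by
    intro j
    rw [Polynomial.coeff_mul_C,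
      show ((-1 : F[X]) ^ (j : ℕ)) = C ((-1 : F) ^ (j : ℕ)) by simp,
      Polynomial.coeff_C_mul, Polynomial.coeff_X_pow]
    split <;> ring
  have hsum : ((Matrix.vandermonde w).det).coeff s = (-1 : F) ^ s * d ⟨s, by omega⟩ := by
    rw [h2, Polynomial.finset_sum_coeff]
    rw [Finset.sum_congr rfl fun j _ => hterm j]
    rw [Finset.sum_eq_single (⟨s, by omega⟩ : Fin (s + 2))]
    · simp
    · intro b _ hb
      rw [if_neg]
      intro h
      exact hb (Fin.ext h.symm)
    · simp
  have hprodneg : (∏ j : Fin (s + 1), (C (v j) - X)) =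
      (-1 : F[X]) ^ (s + 1) * ∏ j : Fin (s + 1), (X - C (v j)) := by
    calc (∏ j : Fin (s + 1), (C (v j) - X))
        = ∏ j : Fin (s + 1), (-1 : F[X]) * (X - C (v j)) :=
          Finset.prod_congr rfl fun j _ => by ring
      _ = _ := by
          rw [Finset.prod_mul_distrib, Finset.prod_const, Finset.card_univ, Fintype.card_fin]
  have hcoeffprod : (∏ j : Fin (s + 1), (X - C (v j))).coeff s = -(∑ i, v i) := by
    have hms : ∏ j : Fin (s + 1), (X - C (v j)) =
        ((Finset.univ.val.map v).map fun t => X - C t).prod := by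
      rw [Multiset.map_map]; rfl
    have hcard : Multiset.card (Finset.univ.val.map v) = s + 1 := by simp
    rw [hms, Multiset.prod_X_sub_C_coeff _ (by rw [hcard]; omega), hcard]
    have h1 : s + 1 - s = 1 := by omega
    rw [h1, esymm_one', pow_one]
    have : (Finset.univ.val.map v).sum = ∑ i, v i := rfl
    rw [this]; ring
  have hLHS : ((Matrix.vandermonde w).det).coeff s =
      (-1 : F) ^ s * ((∏ i : Fin (s + 1), ∏ j ∈ Finset.Ioi i, (v j - v i)) * ∑ i, v i) := by
    rw [h1, Polynomial.coeff_mul_C, hprodneg,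
      show ((-1 : F[X]) ^ (s + 1)) = C ((-1 : F) ^ (s + 1)) by simp,
      Polynomial.coeff_C_mul, hcoeffprod]
    ring
  have hds : d ⟨s, by omega⟩ =
      (∏ i : Fin (s + 1), ∏ j ∈ Finset.Ioi i, (v j - v i)) * ∑ i, v i := by
    have := hsum.symm.trans hLHS
    have hne : ((-1 : F) ^ s) ≠ 0 := pow_ne_zero _ (by norm_num)
    exact mul_left_cancel₀ hne this
  rw [← hds, hd]
  congr 1
  ext i j
  simp only [Matrix.of_apply]
  congr 1
  rcases lt_or_ge (j : ℕ) s with h | h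
  · rw [if_pos h]
    have : Fin.castSucc j < (⟨s, by omega⟩ : Fin (s + 2)) := by
      simp [Fin.lt_def, h]
    rw [Fin.succAbove_of_castSucc_lt _ _ this]
    simp
  · rw [if_neg (by omega)]
    have hj : (j : ℕ) = s := by omega
    have : ¬ Fin.castSucc j < (⟨s, by omega⟩ : Fin (s + 2)) := by
      simp [Fin.lt_def, hj]
    rw [Fin.succAbove_of_le_castSucc _ _ (not_lt.mp this)]
    simp [hj]

-- step A: det D = det M
lemma stepA {r : ℕ} (β : Fin r → F) (η : F) :
    (Dmat0 β η).det = (Matrix.of fun i j : Fin r =>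
      if (i : ℕ) = 0 then 1 + η * β j ^ (r + 1) else β j ^ (i : ℕ)).det := by
  have hM : (Dmat0 β η).submatrix (Fin.last r).succAbove (Fin.last r).succAbove =
      (Matrix.of fun i j : Fin r =>
        if (i : ℕ) = 0 then 1 + η * β j ^ (r + 1) else β j ^ (i : ℕ)) := by
    ext i j
    have hj : (Fin.last r).succAbove j = Fin.castSucc j := by rw [Fin.succAbove_last]
    have hi : (Fin.last r).succAbove i = Fin.castSucc i := by rw [Fin.succAbove_last]
    simp only [Matrix.submatrix_apply, Dmat0, Matrix.of_apply, hi, hj]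
    rw [dif_pos (show ((Fin.castSucc j : ℕ)) < r from j.isLt)]
    have hb : β ⟨(Fin.castSucc j : ℕ), j.isLt⟩ = β j := congrArg β (Fin.ext rfl)
    rw [hb]
    rfl
  rw [Matrix.det_succ_column (Dmat0 β η) (Fin.last r)]
  rw [Finset.sum_eq_single (Fin.last r)]
  · have h0 : Dmat0 β η (Fin.last r) (Fin.last r) = 1 := by
      simp [Dmat0, Fin.last]
    rw [h0, hM]
    rw [show ((-1 : F) ^ ((Fin.last r : ℕ) + (Fin.last r : ℕ))) = 1 by
      rw [Fin.val_last, ← two_mul, pow_mul]; norm_num]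
    ring
  · intro b _ hb
    have h0 : Dmat0 β η b (Fin.last r) = 0 := by
      have : (b : ℕ) ≠ r := fun h => hb (Fin.ext (by simp [h]))
      simp [Dmat0, this]
    rw [h0]; ring
  · simp

lemma detM (s : ℕ) (β : Fin (s + 1) → F) (η : F) :
    (Matrix.of fun i j : Fin (s + 1) =>
      if (i : ℕ) = 0 then 1 + η * β j ^ (s + 1 + 1) else β j ^ (i : ℕ)).det =
    (∏ j : Fin (s + 1), ∏ l ∈ Finset.Ioi j, (β l - β j)) *
      (1 + (-1 : F) ^ s * η * (∏ j, β j) * (∑ j, β j)) := by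
  set W : Matrix (Fin (s + 1)) (Fin (s + 1)) F := Matrix.of fun i j => β j ^ (i : ℕ) with hW
  set u : Fin (s + 1) → F := fun j => β j ^ (s + 2) with hu
  have hM : (Matrix.of fun i j : Fin (s + 1) =>
      if (i : ℕ) = 0 then 1 + η * β j ^ (s + 1 + 1) else β j ^ (i : ℕ)) =
      W.updateRow 0 (W 0 + η • u) := by
    ext i j
    by_cases h : i = 0
    · subst h
      simp [Matrix.updateRow_apply, hW, hu]
    · have h' : (i : ℕ) ≠ 0 := fun hc => h (Fin.ext (by rw [hc]; simp))
      simp [Matrix.updateRow_apply, h, h', hW]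
  have hWdet : W.det = ∏ j : Fin (s + 1), ∏ l ∈ Finset.Ioi j, (β l - β j) := by
    have : W = (Matrix.vandermonde β)ᵀ := by ext i j; rfl
    rw [this, Matrix.det_transpose, Matrix.det_vandermonde]
  set N : Matrix (Fin (s + 1)) (Fin (s + 1)) F := W.updateRow 0 u with hN
  have hsplit : (W.updateRow 0 (W 0 + η • u)).det = W.det + η * N.det := by
    rw [Matrix.det_updateRow_add, Matrix.det_updateRow_smul, Matrix.updateRow_eq_self]
  -- compute N.det via row rotation
  have hQ : N.submatrix (finRotate (s + 1)) id =
      (Matrix.of fun i j : Fin (s + 1) =>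
        β j ^ (if (i : ℕ) < s then (i : ℕ) else s + 1)) * Matrix.diagonal β := by
    ext i j
    rw [Matrix.mul_diagonal]
    simp only [Matrix.submatrix_apply, finRotate_succ_apply, id_eq, Matrix.of_apply]
    rcases lt_or_ge (i : ℕ) s with h | h
    · have hne : i ≠ Fin.last s := by
        intro hc; rw [hc] at h; simp [Fin.last] at h
      have hval : ((i + 1 : Fin (s + 1)) : ℕ) = (i : ℕ) + 1 := by
        rw [Fin.val_add_one, if_neg hne]
      have hne0 : (i + 1 : Fin (s + 1)) ≠ 0 := by
        intro hc
        have := congrArg (Fin.val) hc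
        rw [hval] at this
        simp at this
      have hNv : N (i + 1) j = β j ^ ((i : ℕ) + 1) := by
        rw [hN, Matrix.updateRow_apply, if_neg hne0, hW, Matrix.of_apply, hval]
      rw [hNv, if_pos h, pow_succ]
    · have hlast : i = Fin.last s := by
        apply Fin.ext; simp [Fin.last]; omega
      rw [hlast, Fin.last_add_one, hN, Matrix.updateRow_apply, if_pos rfl, hu,
        if_neg (by omega)]
      ring
  have hsign : ((Equiv.Perm.sign (finRotate (s + 1)) : ℤ) : F) = (-1 : F) ^ s := by
    rw [sign_finRotate]
    push_cast
    ring
  have hNdet : N.det = (-1 : F) ^ s *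
      ((∏ j : Fin (s + 1), ∏ l ∈ Finset.Ioi j, (β l - β j)) * (∑ j, β j) * ∏ j, β j) := by
    have h1 := Matrix.det_permute (finRotate (s + 1)) N
    have htr : (Matrix.of fun i j : Fin (s + 1) =>
        β j ^ (if (i : ℕ) < s then (i : ℕ) else s + 1)) =
        (Matrix.of fun i j : Fin (s + 1) =>
          β i ^ (if (j : ℕ) < s then (j : ℕ) else s + 1))ᵀ := rfl
    rw [hQ, Matrix.det_mul, Matrix.det_diagonal, htr, Matrix.det_transpose,
      gapdet s β, hsign] at h1
    have h2 : (-1 : F) ^ s * ((-1 : F) ^ s * N.det) = N.det := by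
      rw [← mul_assoc, ← pow_add, ← two_mul, pow_mul]
      try norm_num
    calc N.det = (-1 : F) ^ s * ((-1 : F) ^ s * N.det) := h2.symm
    _ = _ := by rw [← h1]; try ring
  rw [hM, hsplit, hWdet, hNdet]
  ring

theorem stmt4 {r : ℕ} (β : Fin r → F) (hβ : Function.Injective β) (η : F) :
    (Dmat0 β η).det =
      (∏ j : Fin r, ∏ l ∈ Finset.Ioi j, (β l - β j)) *
        (1 + (-1 : F) ^ (r + 1 - 2) * η * (∏ j : Fin r, β j) * (∑ j : Fin r, β j)) ∧
    (IsUnit (Dmat0 β η) ↔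
      (-1 : F) ^ r * η * (∏ j : Fin r, β j) * (∑ j : Fin r, β j) ≠ 1) := by
  cases r with
  | zero =>
    constructor
    · rw [Matrix.det_fin_one]
      simp [Dmat0]
    · rw [Matrix.isUnit_iff_isUnit_det, Matrix.det_fin_one]
      simp [Dmat0]
  | succ s =>
    have hdet : (Dmat0 β η).det =
        (∏ j : Fin (s + 1), ∏ l ∈ Finset.Ioi j, (β l - β j)) *
          (1 + (-1 : F) ^ s * η * (∏ j, β j) * (∑ j, β j)) := by
      rw [stepA, detM]
    have hexp : s + 1 + 1 - 2 = s := rfl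
    constructor
    · rw [hdet, hexp]
    · have hV : (∏ j : Fin (s + 1), ∏ l ∈ Finset.Ioi j, (β l - β j)) ≠ 0 :=
        Finset.prod_ne_zero_iff.mpr fun i _ => Finset.prod_ne_zero_iff.mpr fun j hj =>
          sub_ne_zero_of_ne (hβ.ne (Finset.mem_Ioi.mp hj).ne')
      rw [Matrix.isUnit_iff_isUnit_det, isUnit_iff_ne_zero, hdet, mul_ne_zero_iff,
        and_iff_right hV]
      refine not_congr ?_
      constructor
      · intro h
        linear_combination -h
      · intro h
        linear_combination -h

end
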